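/- Let H ≤ GL(d,ℝ) be irreducibly admissible with dual orbit 𝒪 = {hᵀξ₀ : h ∈ H}, and assume additionally that 𝒪^c is closed under multiplication by positive scalars. Let U ⊆ H be a compact neighborhood of the identity in H contained in {u : ‖u − I‖ < 1/2}. Then there is C ≥ 1 such that for every h ∈ H and every ℓ ∈ ℕ: A_H(h)^ℓ ≤ sup_{u∈U} A_H(hu)^ℓ ≤ C^ℓ · A_H(h)^ℓ. In particular, for any weight m on H, ∫_H sup_{u∈U} A_H(hu)^ℓ m(h) dμ_H(h) < ∞ if and only if ∫_H A_H(h)^ℓ m(h) dμ_H(h) < ∞. -/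

import Mathlib

open MeasureTheory Matrix Metric

noncomputable section

variable {n : Type*} [Fintype n] [DecidableEq n]

/-- The dual action `ξ ↦ hᵀ ξ` of a matrix on Euclidean space. -/
def dualAct (h : Matrix n n ℝ) (ξ : EuclideanSpace ℝ n) : EuclideanSpace ℝ n :=
  (EuclideanSpace.equiv n ℝ).symm (h.transpose.mulVec (EuclideanSpace.equiv n ℝ ξ))

/-- The envelope function `A_S` of a set `S` (with respect to Euclidean norm and distance). -/
def env (S : Set (EuclideanSpace ℝ n)) (ξ : EuclideanSpace ℝ n) : ℝ :=
  min (infDist ξ S / (1 + Real.sqrt (‖ξ‖ ^ 2 - infDist ξ S ^ 2))) (1 / (1 + ‖ξ‖))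

/-- The Euclidean operator norm of a matrix. -/
def opNorm (m : Matrix n n ℝ) : ℝ :=
  ‖LinearMap.toContinuousLinearMap (Matrix.toEuclideanLin m)‖

/-- The dual orbit of `ξ₀` under a subgroup `H ≤ GL(d,ℝ)`. -/
def dualOrbit (H : Subgroup (GL n ℝ)) (ξ₀ : EuclideanSpace ℝ n) : Set (EuclideanSpace ℝ n) :=
  {ξ | ∃ h : GL n ℝ, h ∈ H ∧ dualAct (↑h) ξ₀ = ξ}

/-- The envelope function pulled back to the group: `A_H(h) = A_𝒪(hᵀ ξ₀)`. -/
def AH (H : Subgroup (GL n ℝ)) (ξ₀ : EuclideanSpace ℝ n) (h : ↥H) : ℝ :=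
  env (dualOrbit H ξ₀)ᶜ (dualAct (↑(h : GL n ℝ)) ξ₀)

end


/-! ### Auxiliary real inequalities -/

section RealAux

private lemma env_low (δ r : ℝ) (hδ : 0 ≤ δ) (hr : 0 ≤ r) :
    min δ 1 / (1 + r) ≤ min (δ / (1 + Real.sqrt (r ^ 2 - δ ^ 2))) (1 / (1 + r)) := by
  have hs0 : 0 ≤ Real.sqrt (r ^ 2 - δ ^ 2) := Real.sqrt_nonneg _
  have hsr : Real.sqrt (r ^ 2 - δ ^ 2) ≤ r := by
    calc Real.sqrt (r ^ 2 - δ ^ 2) ≤ Real.sqrt (r ^ 2) :=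
          Real.sqrt_le_sqrt (by nlinarith)
      _ = r := by rw [Real.sqrt_sq hr]
  refine le_min ?_ ?_
  · exact div_le_div₀ hδ (min_le_left _ _) (by linarith) (by linarith)
  · exact div_le_div₀ zero_le_one (min_le_right _ _) (by linarith) le_rfl

private lemma env_up (δ r : ℝ) (hδ : 0 ≤ δ) (hr : 0 ≤ r) :
    min (δ / (1 + Real.sqrt (r ^ 2 - δ ^ 2))) (1 / (1 + r)) ≤ 3 * (min δ 1 / (1 + r)) := by
  have hs0 : 0 ≤ Real.sqrt (r ^ 2 - δ ^ 2) := Real.sqrt_nonneg _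
  have hr1 : (0:ℝ) < 1 + r := by linarith
  rcases le_or_gt 1 δ with h1 | h1
  · rw [min_eq_right h1]
    have : min (δ / (1 + Real.sqrt (r ^ 2 - δ ^ 2))) (1 / (1 + r)) ≤ 1 / (1 + r) :=
      min_le_right _ _
    have h2 : (0:ℝ) ≤ 1 / (1 + r) := by positivity
    linarith
  · rw [min_eq_left h1.le]
    rcases le_or_gt δ (r / 2) with h2 | h2
    · have hsr : r / 2 ≤ Real.sqrt (r ^ 2 - δ ^ 2) := by
        have : Real.sqrt ((r / 2) ^ 2) ≤ Real.sqrt (r ^ 2 - δ ^ 2) :=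
          Real.sqrt_le_sqrt (by nlinarith)
        rwa [Real.sqrt_sq (by linarith)] at this
      refine (min_le_left _ _).trans ?_
      rw [div_le_iff₀ (by linarith), mul_comm (3:ℝ), mul_assoc, div_mul_eq_mul_div,
        le_div_iff₀ hr1]
      nlinarith [mul_nonneg hδ hs0]
    · have hr2 : r < 2 := by linarith
      refine (min_le_left _ _).trans ?_
      have hd : δ / (1 + Real.sqrt (r ^ 2 - δ ^ 2)) ≤ δ := by
        apply div_le_self hδ; linarith
      have : δ ≤ 3 * (δ / (1 + r)) := by
        rw [mul_div_assoc', le_div_iff₀ hr1]; nlinarith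
      linarith

private lemma env_core (δ r δ' r' : ℝ) (hδ : 0 ≤ δ) (hr : 0 ≤ r) (hδ' : 0 ≤ δ') (hr' : 0 ≤ r')
    (h1 : δ' ≤ 2 * δ) (h2 : r ≤ 2 * r') :
    min (δ' / (1 + Real.sqrt (r' ^ 2 - δ' ^ 2))) (1 / (1 + r')) ≤
      12 * min (δ / (1 + Real.sqrt (r ^ 2 - δ ^ 2))) (1 / (1 + r)) := by
  have A := env_up δ' r' hδ' hr'
  have B := env_low δ r hδ hr
  have hmin : min δ' 1 ≤ 2 * min δ 1 := by
    rcases le_total δ 1 with h | h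
    · rw [min_eq_left h]; exact (min_le_left _ _).trans h1
    · rw [min_eq_right h]; have := min_le_right δ' 1; linarith
  have hden : min δ' 1 / (1 + r') ≤ 4 * (min δ 1 / (1 + r)) := by
    have hm0 : 0 ≤ min δ 1 := le_min hδ zero_le_one
    have hm0' : 0 ≤ min δ' 1 := le_min hδ' zero_le_one
    rw [div_le_iff₀ (by linarith), mul_comm (4:ℝ), mul_assoc, div_mul_eq_mul_div,
      le_div_iff₀ (by linarith)]
    nlinarith
  linarith

end RealAux

/-! ### Auxiliary matrix/norm facts -/

section MatrixAux

open scoped Matrix.Norms.L2Operator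

variable {n : Type*} [Fintype n] [DecidableEq n]

private lemma opNorm_eq (A : Matrix n n ℝ) : opNorm A = ‖A‖ := rfl

private lemma opNorm_transpose (A : Matrix n n ℝ) : opNorm Aᵀ = opNorm A := by
  rw [opNorm_eq, opNorm_eq, ← Matrix.l2_opNorm_conjTranspose A]; congr 1

private lemma dualAct_mul (A B : Matrix n n ℝ) (ξ : EuclideanSpace ℝ n) :
    dualAct (A * B) ξ = dualAct B (dualAct A ξ) := by
  simp only [dualAct, Matrix.transpose_mul, ← Matrix.mulVec_mulVec]
  rfl

private lemma dualAct_one (ξ : EuclideanSpace ℝ n) : dualAct (1 : Matrix n n ℝ) ξ = ξ := by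
  simp [dualAct]

private lemma norm_dualAct_le (A : Matrix n n ℝ) (ξ : EuclideanSpace ℝ n) :
    ‖dualAct A ξ‖ ≤ opNorm A * ‖ξ‖ := by
  rw [← opNorm_transpose]
  exact (LinearMap.toContinuousLinearMap (Matrix.toEuclideanLin Aᵀ)).le_opNorm ξ

private lemma dualAct_sub (A : Matrix n n ℝ) (ξ η : EuclideanSpace ℝ n) :
    dualAct A ξ - dualAct A η = dualAct A (ξ - η) :=
  (map_sub (Matrix.toEuclideanLin Aᵀ) ξ η).symm

private lemma opNorm_one_le : opNorm (1 : Matrix n n ℝ) ≤ 1 := by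
  rw [opNorm_eq, Matrix.cstar_norm_def, _root_.map_one]
  exact ContinuousLinearMap.norm_id_le

private lemma opNorm_le_two {A : Matrix n n ℝ} (hA : opNorm (A - 1) < 1 / 2) : opNorm A ≤ 2 := by
  have h2 : opNorm A ≤ opNorm (1 : Matrix n n ℝ) + opNorm (A - 1) := by
    simp only [opNorm_eq]
    calc ‖A‖ = ‖1 + (A - 1)‖ := by rw [add_sub_cancel]
      _ ≤ ‖(1 : Matrix n n ℝ)‖ + ‖A - 1‖ := norm_add_le _ _
  have h1 := opNorm_one_le (n := n)
  linarith

private lemma opNorm_inv_le_two {A B : Matrix n n ℝ} (hA : opNorm (A - 1) < 1 / 2)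
    (hAB : A * B = 1) : opNorm B ≤ 2 := by
  have hid : B = 1 + (1 - A) * B := by
    rw [sub_mul, one_mul, hAB]; abel
  have h1 := opNorm_one_le (n := n)
  have hB : opNorm B ≤ 1 + opNorm (A - 1) * opNorm B := by
    simp only [opNorm_eq] at *
    calc ‖B‖ = ‖1 + (1 - A) * B‖ := by rw [← hid]
      _ ≤ ‖(1 : Matrix n n ℝ)‖ + ‖(1 - A) * B‖ := norm_add_le _ _
      _ ≤ 1 + ‖1 - A‖ * ‖B‖ := by
          have := Matrix.l2_opNorm_mul (1 - A) B
          linarith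
      _ = 1 + ‖A - 1‖ * ‖B‖ := by rw [← norm_neg (1 - A), neg_sub]
  have hB0 : 0 ≤ opNorm B := by rw [opNorm_eq]; exact norm_nonneg _
  nlinarith

private lemma infDist_dualAct_le (S : Set (EuclideanSpace ℝ n)) (A : Matrix n n ℝ)
    (hinv : ∀ η ∈ S, dualAct A η ∈ S) (hA : opNorm A ≤ 2) (ξ : EuclideanSpace ℝ n) :
    infDist (dualAct A ξ) S ≤ 2 * infDist ξ S := by
  rcases S.eq_empty_or_nonempty with rfl | hS
  · simp [infDist_empty]
  by_contra hcon
  push_neg at hcon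
  have hD0 : 0 ≤ infDist (dualAct A ξ) S := infDist_nonneg
  have h2 : infDist ξ S < infDist (dualAct A ξ) S / 2 := by linarith
  obtain ⟨η, hη, hdist⟩ := (infDist_lt_iff hS).1 h2
  have hle : infDist (dualAct A ξ) S ≤ dist (dualAct A ξ) (dualAct A η) :=
    infDist_le_dist_of_mem (hinv η hη)
  have hdd : dist (dualAct A ξ) (dualAct A η) ≤ 2 * dist ξ η := by
    rw [dist_eq_norm, dist_eq_norm, dualAct_sub]
    calc ‖dualAct A (ξ - η)‖ ≤ opNorm A * ‖ξ - η‖ := norm_dualAct_le _ _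
      _ ≤ 2 * ‖ξ - η‖ := by nlinarith [norm_nonneg (ξ - η), norm_dualAct_le A (ξ - η)]
  linarith

private lemma dualOrbit_compl_inv (H : Subgroup (GL n ℝ)) (ξ₀ : EuclideanSpace ℝ n)
    (u : GL n ℝ) (hu : u ∈ H) :
    ∀ η ∈ (dualOrbit H ξ₀)ᶜ, dualAct (↑u) η ∈ (dualOrbit H ξ₀)ᶜ := by
  intro η hη hmem
  obtain ⟨g, hg, hgη⟩ := hmem
  apply hη
  refine ⟨g * u⁻¹, mul_mem hg (inv_mem hu), ?_⟩
  have hcoe : ((g * u⁻¹ : GL n ℝ) : Matrix n n ℝ)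
      = ((↑g : Matrix n n ℝ)) * ((↑(u⁻¹ : GL n ℝ) : Matrix n n ℝ)) := Units.val_mul _ _
  rw [hcoe, dualAct_mul, hgη, ← dualAct_mul]
  have : ((↑u : Matrix n n ℝ) * ((↑(u⁻¹ : GL n ℝ) : Matrix n n ℝ))) = 1 := by
    rw [← Units.val_mul, mul_inv_cancel, Units.val_one]
  rw [this, dualAct_one]

/-- The key pointwise comparison: `A_H(hu) ≤ 12 A_H(h)` when `‖u - 1‖ < 1/2`. -/
private lemma AH_mul_le (H : Subgroup (GL n ℝ)) (ξ₀ : EuclideanSpace ℝ n) (h u : ↥H)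
    (hu : opNorm ((↑(u : GL n ℝ) : Matrix n n ℝ) - 1) < 1 / 2) :
    AH H ξ₀ (h * u) ≤ 12 * AH H ξ₀ h := by
  set S := (dualOrbit H ξ₀)ᶜ with hS
  set A : Matrix n n ℝ := ↑(u : GL n ℝ) with hA
  set B : Matrix n n ℝ := ↑((u : GL n ℝ)⁻¹) with hB
  have hAB : A * B = 1 := by
    rw [hA, hB, ← Units.val_mul, mul_inv_cancel, Units.val_one]
  set ξ := dualAct (↑(h : GL n ℝ)) ξ₀ with hxi
  have hξ' : dualAct (↑((h * u : ↥H) : GL n ℝ)) ξ₀ = dualAct A ξ := by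
    have hcoe : (↑((h * u : ↥H) : GL n ℝ) : Matrix n n ℝ)
        = (↑(h : GL n ℝ) : Matrix n n ℝ) * A := rfl
    rw [hcoe, dualAct_mul]
  set ξ' := dualAct A ξ with hxi'
  have hA2 : opNorm A ≤ 2 := opNorm_le_two hu
  have hB2 : opNorm B ≤ 2 := opNorm_inv_le_two hu hAB
  have hr : ‖ξ‖ ≤ 2 * ‖ξ'‖ := by
    have hback : ξ = dualAct B ξ' := by
      rw [hxi', ← dualAct_mul, hAB, dualAct_one]
    calc ‖ξ‖ = ‖dualAct B ξ'‖ := by rw [← hback]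
      _ ≤ opNorm B * ‖ξ'‖ := norm_dualAct_le _ _
      _ ≤ 2 * ‖ξ'‖ := by nlinarith [norm_nonneg ξ']
  have hδ : infDist ξ' S ≤ 2 * infDist ξ S :=
    infDist_dualAct_le S A (dualOrbit_compl_inv H ξ₀ (u : GL n ℝ) u.2) hA2 ξ
  show env S (dualAct (↑((h * u : ↥H) : GL n ℝ)) ξ₀) ≤ 12 * env S ξ
  rw [hξ']
  exact env_core (infDist ξ S) ‖ξ‖ (infDist ξ' S) ‖ξ'‖ infDist_nonneg (norm_nonneg _)
    infDist_nonneg (norm_nonneg _) hδ hr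

private lemma AH_nonneg (H : Subgroup (GL n ℝ)) (ξ₀ : EuclideanSpace ℝ n) (h : ↥H) :
    0 ≤ AH H ξ₀ h := by
  refine le_min ?_ ?_
  · have := Real.sqrt_nonneg (‖dualAct (↑(h : GL n ℝ)) ξ₀‖ ^ 2
      - infDist (dualAct (↑(h : GL n ℝ)) ξ₀) (dualOrbit H ξ₀)ᶜ ^ 2)
    exact div_nonneg infDist_nonneg (by linarith)
  · positivity

private lemma AH_le_one (H : Subgroup (GL n ℝ)) (ξ₀ : EuclideanSpace ℝ n) (h : ↥H) :
    AH H ξ₀ h ≤ 1 := by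
  refine (min_le_right _ _).trans ?_
  rw [div_le_one (by positivity)]
  linarith [norm_nonneg (dualAct (↑(h : GL n ℝ)) ξ₀)]

end MatrixAux

/-- For an irreducibly admissible `H` whose dual orbit complement is stable under
positive dilations, and a compact unit neighborhood `U ⊆ {u : ‖u − I‖ < 1/2}` in `H`, there is
`C ≥ 1` with `A_H(h)^ℓ ≤ sup_{u∈U} A_H(hu)^ℓ ≤ C^ℓ·A_H(h)^ℓ` for all `h, ℓ`; consequently for any
weight `m`, the maximal function of `A_H^ℓ` is `L¹_m`-integrable iff `A_H^ℓ` is. -/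
theorem stmt8 (d : ℕ) (H : Subgroup (GL (Fin d) ℝ))
    (hHclosed : IsClosed (H : Set (GL (Fin d) ℝ)))
    (ξ₀ : EuclideanSpace ℝ (Fin d))
    (hOopen : IsOpen (dualOrbit H ξ₀))
    (hOnull : volume (dualOrbit H ξ₀)ᶜ = 0)
    (hstab : IsCompact {h : GL (Fin d) ℝ | h ∈ H ∧ dualAct (↑h) ξ₀ = ξ₀})
    (hscal : ∀ t : ℝ, 0 < t → ∀ ξ ∈ (dualOrbit H ξ₀)ᶜ, t • ξ ∈ (dualOrbit H ξ₀)ᶜ)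
    [MeasurableSpace ↥H] [BorelSpace ↥H]
    (μ : Measure ↥H) [μ.IsHaarMeasure]
    (U : Set ↥H) (hUcomp : IsCompact U) (hUnhd : U ∈ nhds (1 : ↥H))
    (hUsmall : ∀ u ∈ U, opNorm ((↑(u : GL (Fin d) ℝ) : Matrix (Fin d) (Fin d) ℝ) - 1) < 1 / 2) :
    (∃ C : ℝ, 1 ≤ C ∧ ∀ (h : ↥H) (ℓ : ℕ),
        AH H ξ₀ h ^ ℓ ≤ (⨆ u : U, AH H ξ₀ (h * ↑u) ^ ℓ) ∧
        (⨆ u : U, AH H ξ₀ (h * ↑u) ^ ℓ) ≤ C ^ ℓ * AH H ξ₀ h ^ ℓ) ∧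
      ∀ m : ↥H → ℝ, Continuous m → (∀ h, 0 < m h) → (∀ x y, m (x * y) ≤ m x * m y) →
        ∀ ℓ : ℕ,
          ((∫⁻ h : ↥H, (⨆ u ∈ U, ENNReal.ofReal (AH H ξ₀ (h * u) ^ ℓ)) *
              ENNReal.ofReal (m h) ∂μ) < ⊤ ↔
            (∫⁻ h : ↥H, ENNReal.ofReal (AH H ξ₀ h ^ ℓ * m h) ∂μ) < ⊤) := by
  have h1U : (1 : ↥H) ∈ U := mem_of_mem_nhds hUnhd
  haveI hUne : Nonempty U := ⟨⟨1, h1U⟩⟩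
  -- key pointwise bound
  have key : ∀ (h : ↥H), ∀ u ∈ U, AH H ξ₀ (h * u) ≤ 12 * AH H ξ₀ h := fun h u hu =>
    AH_mul_le H ξ₀ h u (hUsmall u hu)
  have keypow : ∀ (h : ↥H) (ℓ : ℕ), ∀ u ∈ U, AH H ξ₀ (h * u) ^ ℓ ≤ 12 ^ ℓ * AH H ξ₀ h ^ ℓ := by
    intro h ℓ u hu
    rw [← mul_pow]
    exact pow_le_pow_left₀ (AH_nonneg H ξ₀ _) (key h u hu) ℓ
  have hbdd : ∀ (h : ↥H) (ℓ : ℕ), BddAbove (Set.range fun u : U => AH H ξ₀ (h * ↑u) ^ ℓ) := by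
    intro h ℓ
    refine ⟨1, ?_⟩
    rintro x ⟨u, rfl⟩
    exact pow_le_one₀ (AH_nonneg H ξ₀ _) (AH_le_one H ξ₀ _)
  constructor
  · refine ⟨12, by norm_num, fun h ℓ => ⟨?_, ?_⟩⟩
    · have := le_ciSup (hbdd h ℓ) (⟨1, h1U⟩ : U)
      simpa using this
    · exact ciSup_le fun u => keypow h ℓ u u.2
  · intro m hmc hmpos hmsub ℓ
    constructor
    · intro hfin
      refine lt_of_le_of_lt (lintegral_mono fun h => ?_) hfin
      rw [ENNReal.ofReal_mul (pow_nonneg (AH_nonneg H ξ₀ h) ℓ)]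
      gcongr
      refine le_trans (le_of_eq ?_) (le_biSup _ h1U)
      rw [mul_one]
    · intro hfin
      have hle : (∫⁻ h : ↥H, (⨆ u ∈ U, ENNReal.ofReal (AH H ξ₀ (h * u) ^ ℓ)) *
          ENNReal.ofReal (m h) ∂μ) ≤
          ENNReal.ofReal ((12:ℝ) ^ ℓ) * ∫⁻ h : ↥H, ENNReal.ofReal (AH H ξ₀ h ^ ℓ * m h) ∂μ := by
        rw [← lintegral_const_mul' _ _ ENNReal.ofReal_ne_top]
        refine lintegral_mono fun h => ?_
        have hsup : (⨆ u ∈ U, ENNReal.ofReal (AH H ξ₀ (h * u) ^ ℓ)) ≤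
            ENNReal.ofReal ((12:ℝ) ^ ℓ * AH H ξ₀ h ^ ℓ) :=
          iSup₂_le fun u hu => ENNReal.ofReal_le_ofReal (keypow h ℓ u hu)
        calc (⨆ u ∈ U, ENNReal.ofReal (AH H ξ₀ (h * u) ^ ℓ)) * ENNReal.ofReal (m h)
            ≤ ENNReal.ofReal ((12:ℝ) ^ ℓ * AH H ξ₀ h ^ ℓ) * ENNReal.ofReal (m h) := by gcongr
          _ = ENNReal.ofReal ((12:ℝ) ^ ℓ) * ENNReal.ofReal (AH H ξ₀ h ^ ℓ * m h) := by
              rw [ENNReal.ofReal_mul (by positivity),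
                ENNReal.ofReal_mul (pow_nonneg (AH_nonneg H ξ₀ h) ℓ), mul_assoc]
      exact lt_of_le_of_lt hle (ENNReal.mul_lt_top ENNReal.ofReal_lt_top hfin)
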